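/- Let B be a real Banach space and let f : B → ℝ ∪ {+∞} be proper, convex, and lower semicontinuous. Then f coincides with its biconjugate computed through the dual pairing: for every x ∈ B, f(x) = sup_{y ∈ B*} (⟨y, x⟩ − f*(y)), where f*(y) = sup_{x' ∈ B} (⟨y, x'⟩ − f(x')). -/

import Mathlib

open scoped Topology

/-- Convexity for `EReal`-valued functions on a real vector space. -/
def ConvexE {B : Type*} [AddCommGroup B] [Module ℝ B] (f : B → EReal) : Prop :=
  ∀ x y : B, ∀ a b : ℝ, 0 ≤ a → 0 ≤ b → a + b = 1 →
    f (a • x + b • y) ≤ (a : EReal) * f x + (b : EReal) * f y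

namespace FMaux

variable {B : Type*} [NormedAddCommGroup B] [NormedSpace ℝ B]

lemma le_of_forall_le_real {m : ℝ} {a : EReal} (h : ∀ t : ℝ, a ≤ (t : EReal) → m ≤ t) :
    (m : EReal) ≤ a := by
  by_contra hc
  push_neg at hc
  obtain ⟨t, h1, h2⟩ := EReal.exists_between_coe_real hc
  have := h t h1.le
  exact absurd h2 (not_lt.2 (by exact_mod_cast this))

lemma real_rep {a : EReal} (h1 : a ≠ ⊤) (h2 : a ≠ ⊥) : ∃ m : ℝ, a = (m : EReal) :=
  ⟨a.toReal, (EReal.coe_toReal h1 h2).symm⟩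

lemma epi_closed (f : B → EReal) (hlsc : LowerSemicontinuous f) :
    IsClosed {p : B × ℝ | f p.1 ≤ (p.2 : EReal)} := by
  rw [← isOpen_compl_iff, isOpen_iff_mem_nhds]
  rintro ⟨x, r⟩ h
  simp only [Set.mem_compl_iff, Set.mem_setOf_eq, not_le] at h
  obtain ⟨r', hr1, hr2⟩ := EReal.exists_between_coe_real h
  have hU : ∀ᶠ x' in 𝓝 x, (r' : EReal) < f x' := hlsc x _ hr2
  rw [nhds_prod_eq]
  refine Filter.mem_of_superset
    (Filter.prod_mem_prod hU (Iio_mem_nhds (show r < r' by exact_mod_cast hr1))) ?_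
  rintro ⟨x', s⟩ ⟨h1, h2⟩
  simp only [Set.mem_compl_iff, Set.mem_setOf_eq, not_le]
  exact lt_trans (by exact_mod_cast h2) h1

lemma epi_convex (f : B → EReal) (hconv : ConvexE f) :
    Convex ℝ {p : B × ℝ | f p.1 ≤ (p.2 : EReal)} := by
  rintro ⟨x, s⟩ hx ⟨y, t⟩ hy a b ha hb hab
  simp only [Set.mem_setOf_eq] at hx hy ⊢
  have h1 : f (a • x + b • y) ≤ (a : EReal) * f x + (b : EReal) * f y :=
    hconv x y a b ha hb hab
  have h2 : (a : EReal) * f x ≤ (a : EReal) * (s : EReal) :=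
    mul_le_mul_of_nonneg_left hx (by exact_mod_cast ha)
  have h3 : (b : EReal) * f y ≤ (b : EReal) * (t : EReal) :=
    mul_le_mul_of_nonneg_left hy (by exact_mod_cast hb)
  have : f (a • x + b • y) ≤ ((a * s + b * t : ℝ) : EReal) := by
    rw [EReal.coe_add, EReal.coe_mul, EReal.coe_mul]
    exact h1.trans (add_le_add h2 h3)
  simpa using this

/-- Separation of a point strictly below the graph from the epigraph. -/
lemma sep (f : B → EReal) (hbot : ∀ x, f x ≠ ⊥) (hproper : ∃ x, f x ≠ ⊤)
    (hconv : ConvexE f) (hlsc : LowerSemicontinuous f) [CompleteSpace B]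
    (x : B) (r : ℝ) (hr : (r : EReal) < f x) :
    ∃ (g : B →L[ℝ] ℝ) (c u : ℝ), 0 ≤ c ∧ g x + r * c < u ∧
      ∀ x' (t : ℝ), f x' ≤ (t : EReal) → u < g x' + t * c := by
  have hpt : (x, r) ∉ {p : B × ℝ | f p.1 ≤ (p.2 : EReal)} := by
    simp only [Set.mem_setOf_eq, not_le]; exact hr
  obtain ⟨φ, u, hu1, hu2⟩ :=
    geometric_hahn_banach_point_closed (epi_convex f hconv) (epi_closed f hlsc) hpt
  have hd : ∀ (z : B) (t : ℝ), φ (z, t) = φ (z, 0) + t * φ (0, 1) := by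
    intro z t
    have hz : ((z, t) : B × ℝ) = (z, 0) + t • ((0 : B), (1 : ℝ)) := by
      simp [Prod.ext_iff]
    rw [hz, map_add, map_smul, smul_eq_mul]
  set g : B →L[ℝ] ℝ := φ.comp (ContinuousLinearMap.inl ℝ B ℝ) with hg
  have hgapp : ∀ z : B, g z = φ (z, 0) := fun z => rfl
  set c : ℝ := φ (0, 1) with hc
  obtain ⟨x0, hx0⟩ := hproper
  obtain ⟨r0, hr0⟩ := real_rep hx0 (hbot x0)
  have hcnn : 0 ≤ c := by
    by_contra hneg
    push_neg at hneg
    set t : ℝ := max r0 ((u - φ (x0, 0)) / c) with ht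
    have hmem : (x0, t) ∈ {p : B × ℝ | f p.1 ≤ (p.2 : EReal)} := by
      simp only [Set.mem_setOf_eq, hr0]
      exact_mod_cast le_max_left r0 _
    have h1 : u < φ (x0, 0) + t * c := by rw [← hd]; exact hu2 _ hmem
    have h2 : t * c ≤ u - φ (x0, 0) :=
      (div_le_iff_of_neg hneg).1 (le_max_right _ _)
    linarith
  refine ⟨g, c, u, hcnn, ?_, ?_⟩
  · rw [hgapp, ← hd]; exact hu1
  · intro x' t ht
    rw [hgapp, ← hd]
    exact hu2 _ ht

lemma minorant_of_sep (f : B → EReal) (g : B →L[ℝ] ℝ) (c u : ℝ) (hc : 0 < c)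
    (hsep : ∀ x' (t : ℝ), f x' ≤ (t : EReal) → u < g x' + t * c) :
    ∀ x', (((u - g x') / c : ℝ) : EReal) ≤ f x' := by
  intro x'
  apply le_of_forall_le_real
  intro t ht
  have := hsep x' t ht
  rw [div_le_iff₀ hc]
  linarith

lemma exists_minorant (f : B → EReal) (hbot : ∀ x, f x ≠ ⊥) (hproper : ∃ x, f x ≠ ⊤)
    (hconv : ConvexE f) (hlsc : LowerSemicontinuous f) [CompleteSpace B] :
    ∃ (y : B →L[ℝ] ℝ) (β : ℝ), ∀ x', ((y x' - β : ℝ) : EReal) ≤ f x' := by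
  obtain ⟨x0, hx0⟩ := hproper
  obtain ⟨r0, hr0⟩ := real_rep hx0 (hbot x0)
  have hr : ((r0 - 1 : ℝ) : EReal) < f x0 := by
    rw [hr0]; exact_mod_cast sub_one_lt r0
  obtain ⟨g, c, u, hcnn, hx, hsep⟩ := sep f hbot ⟨x0, hx0⟩ hconv hlsc x0 (r0 - 1) hr
  have h1 : u < g x0 + r0 * c := hsep x0 r0 (le_of_eq hr0)
  have hcpos : 0 < c := by nlinarith
  have hmin := minorant_of_sep f g c u hcpos hsep
  refine ⟨(-(c⁻¹)) • g, -(u / c), fun x' => ?_⟩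
  have he : (-(c⁻¹)) • g x' - -(u / c) = (u - g x') / c := by
    field_simp
    rw [smul_eq_mul, ← mul_assoc, mul_neg, one_div, mul_inv_cancel₀ hcpos.ne']; ring
  rw [show ((-(c⁻¹)) • g) x' = (-(c⁻¹)) • g x' from rfl, he]
  exact hmin x'

lemma conj_le (f : B → EReal) (hbot : ∀ x, f x ≠ ⊥) (y : B →L[ℝ] ℝ) (β : ℝ)
    (h : ∀ x', ((y x' - β : ℝ) : EReal) ≤ f x') :
    (⨆ x' : B, ((y x' : EReal) - f x')) ≤ (β : EReal) := by
  refine iSup_le fun x' => ?_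
  by_cases htop : f x' = ⊤
  · rw [htop, EReal.sub_top]; exact bot_le
  · obtain ⟨m, hm⟩ := real_rep htop (hbot x')
    have h' : y x' - β ≤ m := by
      have := h x'; rw [hm] at this; exact_mod_cast this
    rw [hm, ← EReal.coe_sub]
    exact_mod_cast by linarith

lemma easy (f : B → EReal) (hbot : ∀ x, f x ≠ ⊥) (x : B) (y : B →L[ℝ] ℝ) :
    (y x : EReal) - (⨆ x' : B, ((y x' : EReal) - f x')) ≤ f x := by
  by_cases htop : f x = ⊤
  · rw [htop]; exact le_top
  · obtain ⟨m, hm⟩ := real_rep htop (hbot x)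
    have h1 : ((y x - m : ℝ) : EReal) ≤ ⨆ x' : B, ((y x' : EReal) - f x') :=
      le_iSup_of_le x (by rw [hm, ← EReal.coe_sub])
    calc (y x : EReal) - (⨆ x' : B, ((y x' : EReal) - f x'))
        ≤ (y x : EReal) - ((y x - m : ℝ) : EReal) := EReal.sub_le_sub le_rfl h1
      _ = (m : EReal) := by rw [← EReal.coe_sub]; norm_num
      _ = f x := hm.symm

lemma aux_key (f : B → EReal) (hbot : ∀ x, f x ≠ ⊥) (x0 : B) (hx0 : f x0 ≠ ⊤)
    (x : B) (r : ℝ) (y : B →L[ℝ] ℝ) (β : ℝ)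
    (hminor : ∀ x', ((y x' - β : ℝ) : EReal) ≤ f x') (hval : r < y x - β) :
    (r : EReal) ≤ ⨆ z : B →L[ℝ] ℝ, ((z x : EReal) - ⨆ x' : B, ((z x' : EReal) - f x')) := by
  obtain ⟨r0, hr0⟩ := real_rep hx0 (hbot x0)
  set S : EReal := ⨆ x' : B, ((y x' : EReal) - f x') with hS
  have h1 : S ≤ (β : EReal) := conj_le f hbot y β hminor
  have h2 : ((y x0 - r0 : ℝ) : EReal) ≤ S :=
    le_iSup_of_le x0 (by rw [hr0, ← EReal.coe_sub])
  have hnb : S ≠ ⊥ := fun h => EReal.coe_ne_bot _ (le_bot_iff.1 (h ▸ h2))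
  have hnt : S ≠ ⊤ := fun h => by rw [h] at h1; simp at h1
  obtain ⟨s, hs⟩ := real_rep hnt hnb
  have hsβ : s ≤ β := by rw [hs] at h1; exact_mod_cast h1
  have h3 : (r : EReal) ≤ (y x : EReal) - S := by
    rw [hs, ← EReal.coe_sub]
    exact_mod_cast (by linarith : r ≤ y x - s)
  exact h3.trans (le_iSup (fun z : B →L[ℝ] ℝ =>
    ((z x : EReal) - ⨆ x' : B, ((z x' : EReal) - f x'))) y)

end FMaux

/-- Fenchel–Moreau: a proper convex lower semicontinuous function on a
real Banach space equals its biconjugate computed through the dual pairing. -/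
theorem stmt1 {B : Type*} [NormedAddCommGroup B] [NormedSpace ℝ B] [CompleteSpace B]
    (f : B → EReal) (hbot : ∀ x, f x ≠ ⊥) (hproper : ∃ x, f x ≠ ⊤)
    (hconv : ConvexE f) (hlsc : LowerSemicontinuous f) :
    ∀ x : B, f x = ⨆ y : B →L[ℝ] ℝ,
      ((y x : EReal) - ⨆ x' : B, ((y x' : EReal) - f x')) := by
  intro x
  obtain ⟨x0, hx0⟩ := hproper
  refine le_antisymm ?_ (iSup_le fun y => FMaux.easy f hbot x y)
  have key : ∀ r : ℝ, (r : EReal) < f x →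
      (r : EReal) ≤ ⨆ y : B →L[ℝ] ℝ,
        ((y x : EReal) - ⨆ x' : B, ((y x' : EReal) - f x')) := by
    intro r hr
    obtain ⟨g, c, u, hcnn, hx, hsep⟩ := FMaux.sep f hbot ⟨x0, hx0⟩ hconv hlsc x r hr
    rcases hcnn.lt_or_eq with hc | hc
    · -- c > 0 : direct minorant from separation
      have hmin := FMaux.minorant_of_sep f g c u hc hsep
      set y : B →L[ℝ] ℝ := (-(c⁻¹)) • g with hy
      set β : ℝ := -(u / c) with hβ
      have he : ∀ z : B, y z - β = (u - g z) / c := by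
        intro z
        rw [hy, hβ, show ((-(c⁻¹)) • g) z = (-(c⁻¹)) • g z from rfl]
        field_simp
        rw [smul_eq_mul, ← mul_assoc, mul_neg, one_div, mul_inv_cancel₀ hc.ne']; ring
      have hminor : ∀ x', ((y x' - β : ℝ) : EReal) ≤ f x' := by
        intro x'; rw [he x']; exact hmin x'
      have hval : r < y x - β := by
        rw [he x, lt_div_iff₀ hc]; linarith
      exact FMaux.aux_key f hbot x0 hx0 x r y β hminor hval
    · -- c = 0 : tilt a global minorant
      rw [← hc] at hx hsep
      simp only [mul_zero, add_zero] at hx hsep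
      obtain ⟨y0, β0, hm0⟩ := FMaux.exists_minorant f hbot ⟨x0, hx0⟩ hconv hlsc
      have hq : 0 < u - g x := by linarith
      set lam : ℝ := max 0 ((r + 1 - (y0 x - β0)) / (u - g x)) with hlam
      have hlam0 : 0 ≤ lam := le_max_left _ _
      set y : B →L[ℝ] ℝ := y0 - lam • g with hy
      set β : ℝ := β0 - lam * u with hβ
      have he : ∀ z : B, y z - β = (y0 z - β0) + lam * (u - g z) := by
        intro z
        rw [hy, hβ, show (y0 - lam • g) z = y0 z - lam • g z from rfl, smul_eq_mul]
        ring
      have hminor : ∀ x', ((y x' - β : ℝ) : EReal) ≤ f x' := by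
        intro x'
        apply FMaux.le_of_forall_le_real
        intro t ht
        have h1 : u < g x' := hsep x' t ht
        have h2 : y0 x' - β0 ≤ t := by
          have := (hm0 x').trans ht; exact_mod_cast this
        have h3 : lam * (u - g x') ≤ 0 :=
          mul_nonpos_of_nonneg_of_nonpos hlam0 (by linarith)
        rw [he x']; linarith
      have hval : r < y x - β := by
        rw [he x]
        have hge : (r + 1 - (y0 x - β0)) / (u - g x) ≤ lam := le_max_right _ _
        have := (div_le_iff₀ hq).1 hge
        linarith
      exact FMaux.aux_key f hbot x0 hx0 x r y β hminor hval
  refine le_of_forall_lt_imp_le_of_dense fun c hc => ?_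
  obtain ⟨r, hr1, hr2⟩ := EReal.exists_between_coe_real hc
  exact hr1.le.trans (key r hr2)
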